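/- Let n ≥ 1 and let Y, Z be Hermitian n×n complex matrices. Then the trace of [Y,Z]² is a real number, and it satisfies −2·(tr(Y²)·tr(Z²) − (tr(YZ))²) ≤ tr([Y,Z]²) ≤ 0. (This expresses that the sectional curvature of the symmetric spaces SL(n,ℂ)/SU(n), SL(n,ℝ)/SO(n) and Sp(n,ℝ)/U(n/2), in the Riemannian metric induced by the Killing form B(X,Y) = 2n·tr(XY), lies in the interval [−1/n, 0].) -/

import Mathlib

open Matrix
section Aux

/-- Core real inequality. -/
lemma core_ineq (n : ℕ) (d : Fin n → ℝ) (t : Fin n → Fin n → ℝ)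
    (ht : ∀ i j, 0 ≤ t i j) (w : Fin n → ℝ) (htw : ∀ i, t i i = w i ^ 2) :
    ∑ i, ∑ j, (d i - d j) ^ 2 * t i j ≤
      2 * ((∑ i, d i ^ 2) * (∑ i, ∑ j, t i j) - (∑ i, d i * w i) ^ 2) := by
  set S : ℝ := ∑ i, d i ^ 2 with hS
  have hS0 : 0 ≤ S := Finset.sum_nonneg fun i _ => sq_nonneg _
  have hCS : (∑ i, d i * w i) ^ 2 ≤ S * ∑ i, w i ^ 2 :=
    Finset.sum_mul_sq_le_sq_mul_sq Finset.univ d w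
  have hstep : ∑ i, ∑ j, (d i - d j) ^ 2 * t i j ≤
      ∑ i, ∑ j, (2 * S * t i j - (if i = j then 2 * S * t i j else 0)) := by
    refine Finset.sum_le_sum fun i _ => Finset.sum_le_sum fun j _ => ?_
    by_cases h : i = j
    · subst h; simp
    · simp only [h, if_false, sub_zero]
      have hpair : d i ^ 2 + d j ^ 2 ≤ S := by
        rw [hS]
        have := Finset.sum_le_sum_of_subset_of_nonneg
          (Finset.subset_univ ({i, j} : Finset (Fin n)))
          (fun k _ _ => sq_nonneg (d k))
        rwa [Finset.sum_pair h] at this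
      have h1 : (d i - d j) ^ 2 ≤ 2 * S := by nlinarith [sq_nonneg (d i + d j)]
      exact mul_le_mul_of_nonneg_right h1 (ht i j)
  have hsum : ∑ i, ∑ j, (2 * S * t i j - (if i = j then 2 * S * t i j else 0)) =
      2 * S * (∑ i, ∑ j, t i j) - 2 * S * ∑ i, t i i := by
    simp [Finset.sum_sub_distrib, Finset.mul_sum]
  have hdiag : ∑ i, t i i = ∑ i, w i ^ 2 := Finset.sum_congr rfl fun i _ => htw i
  calc ∑ i, ∑ j, (d i - d j) ^ 2 * t i j
      ≤ 2 * S * (∑ i, ∑ j, t i j) - 2 * S * ∑ i, t i i := by rw [← hsum]; exact hstep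
    _ ≤ 2 * (S * (∑ i, ∑ j, t i j) - (∑ i, d i * w i) ^ 2) := by
        rw [hdiag]; nlinarith [hCS]

end Aux

lemma trace_comm_sq (n : ℕ) (d : Fin n → ℝ) (W : Matrix (Fin n) (Fin n) ℂ)
    (hW : W.IsHermitian) (D : Matrix (Fin n) (Fin n) ℂ)
    (hD : D = diagonal (fun i => (d i : ℂ))) :
    ((D * W - W * D) * (D * W - W * D)).trace =
      -((∑ i, ∑ j, (d i - d j) ^ 2 * Complex.normSq (W i j) : ℝ) : ℂ) := by
  have hconj : ∀ i j, W j i = (starRingEnd ℂ) (W i j) := by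
    intro i j
    conv_lhs => rw [← hW.eq]
    simp [conjTranspose_apply]
  have hC : ∀ i j, (D * W - W * D) i j = ((d i : ℂ) - d j) * W i j := by
    intro i j
    simp [hD, Matrix.sub_apply, diagonal_mul, mul_diagonal, sub_mul]; ring
  rw [Matrix.trace]
  push_cast
  rw [← Finset.sum_neg_distrib]
  refine Finset.sum_congr rfl fun i _ => ?_
  rw [diag_apply, mul_apply, ← Finset.sum_neg_distrib]
  refine Finset.sum_congr rfl fun j _ => ?_
  rw [hC i j, hC j i, hconj i j]
  have h := Complex.mul_conj (W i j)
  linear_combination (-(((d i : ℂ) - d j)^2)) * h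

lemma trace_DD (n : ℕ) (d : Fin n → ℝ) :
    ((diagonal (fun i => (d i : ℂ))) * (diagonal (fun i => (d i : ℂ)))).trace =
      ((∑ i, d i ^ 2 : ℝ) : ℂ) := by
  simp [diagonal_mul_diagonal, trace_diagonal, sq]

lemma trace_WW (n : ℕ) (W : Matrix (Fin n) (Fin n) ℂ) (hW : W.IsHermitian) :
    (W * W).trace = ((∑ i, ∑ j, Complex.normSq (W i j) : ℝ) : ℂ) := by
  have hconj : ∀ i j, W j i = (starRingEnd ℂ) (W i j) := by
    intro i j
    conv_lhs => rw [← hW.eq]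
    simp [conjTranspose_apply]
  rw [Matrix.trace]
  push_cast
  refine Finset.sum_congr rfl fun i _ => ?_
  rw [diag_apply, mul_apply]
  refine Finset.sum_congr rfl fun j _ => ?_
  rw [hconj i j]
  exact Complex.mul_conj (W i j)

lemma diag_real (n : ℕ) (W : Matrix (Fin n) (Fin n) ℂ) (hW : W.IsHermitian) (i : Fin n) :
    W i i = ((W i i).re : ℂ) := by
  have : W i i = (starRingEnd ℂ) (W i i) := by
    conv_lhs => rw [← hW.eq]; simp [conjTranspose_apply]
  exact (Complex.conj_eq_iff_re.mp this.symm).symm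

lemma trace_DW (n : ℕ) (d : Fin n → ℝ) (W : Matrix (Fin n) (Fin n) ℂ) (hW : W.IsHermitian) :
    ((diagonal (fun i => (d i : ℂ))) * W).trace = ((∑ i, d i * (W i i).re : ℝ) : ℂ) := by
  rw [Matrix.trace]
  push_cast
  refine Finset.sum_congr rfl fun i _ => ?_
  rw [diag_apply, diagonal_mul]
  conv_lhs => rw [diag_real n W hW i]

/-- For `n ≥ 1` and Hermitian `n×n` complex matrices `Y, Z`, the trace of
`[Y,Z]²` is real and satisfies `−2·(tr(Y²)·tr(Z²) − (tr(YZ))²) ≤ tr([Y,Z]²) ≤ 0`. -/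
theorem stmt0 (n : ℕ) (hn : 1 ≤ n) (Y Z : Matrix (Fin n) (Fin n) ℂ)
    (hY : Y.IsHermitian) (hZ : Z.IsHermitian) :
    ((Y * Z - Z * Y) * (Y * Z - Z * Y)).trace.im = 0 ∧
    -2 * ((Y * Y).trace.re * (Z * Z).trace.re - ((Y * Z).trace.re) ^ 2) ≤
      ((Y * Z - Z * Y) * (Y * Z - Z * Y)).trace.re ∧
    ((Y * Z - Z * Y) * (Y * Z - Z * Y)).trace.re ≤ 0 := by
  set U : Matrix (Fin n) (Fin n) ℂ := (hY.eigenvectorUnitary : Matrix (Fin n) (Fin n) ℂ) with hU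
  have hUmem := (hY.eigenvectorUnitary).2
  have hsU : star U * U = 1 := Matrix.mem_unitaryGroup_iff'.mp hUmem
  have hUs : U * star U = 1 := Matrix.mem_unitaryGroup_iff.mp hUmem
  set d : Fin n → ℝ := hY.eigenvalues with hd
  set D : Matrix (Fin n) (Fin n) ℂ := diagonal (fun i => (d i : ℂ)) with hDdef
  have hYD : Y = U * D * star U := by
    have := hY.spectral_theorem
    rw [Unitary.conjStarAlgAut_apply] at this
    exact this
  set W : Matrix (Fin n) (Fin n) ℂ := star U * Z * U with hWdef
  have hW : W.IsHermitian := by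
    unfold Matrix.IsHermitian
    simp [hWdef, conjTranspose_mul, Matrix.mul_assoc, hZ.eq, star_eq_conjTranspose]
  have hZW : Z = U * W * star U := by
    rw [hWdef]
    calc Z = (U * star U) * Z * (U * star U) := by rw [hUs]; simp
    _ = U * (star U * Z * U) * star U := by simp only [Matrix.mul_assoc]
  have key : ∀ A B : Matrix (Fin n) (Fin n) ℂ,
      ((U * A * star U) * (U * B * star U)).trace = (A * B).trace := by
    intro A B
    have h1 : star U * (U * (B * star U)) = B * star U := by
      rw [← Matrix.mul_assoc, hsU, Matrix.one_mul]
    have h2 : (U * A * star U) * (U * B * star U) = U * (A * B) * star U := by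
      simp only [Matrix.mul_assoc, h1]
    rw [h2, Matrix.trace_mul_cycle, ← Matrix.mul_assoc, hsU, Matrix.one_mul]
  have hcomm : Y * Z - Z * Y = U * (D * W - W * D) * star U := by
    rw [hYD, hZW]
    have h1 : star U * (U * (W * star U)) = W * star U := by
      rw [← Matrix.mul_assoc, hsU, Matrix.one_mul]
    have h2 : star U * (U * (D * star U)) = D * star U := by
      rw [← Matrix.mul_assoc, hsU, Matrix.one_mul]
    simp only [Matrix.mul_sub, Matrix.sub_mul, Matrix.mul_assoc, h1, h2]
  -- trace identities
  have tYY : (Y * Y).trace = ((∑ i, d i ^ 2 : ℝ) : ℂ) := by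
    rw [hYD, key, hDdef, trace_DD]
  have tZZ : (Z * Z).trace = ((∑ i, ∑ j, Complex.normSq (W i j) : ℝ) : ℂ) := by
    rw [hZW, key, trace_WW n W hW]
  have tYZ : (Y * Z).trace = ((∑ i, d i * (W i i).re : ℝ) : ℂ) := by
    rw [hYD, hZW, key, hDdef, trace_DW n d W hW]
  have tC : ((Y * Z - Z * Y) * (Y * Z - Z * Y)).trace =
      -((∑ i, ∑ j, (d i - d j) ^ 2 * Complex.normSq (W i j) : ℝ) : ℂ) := by
    rw [hcomm, key, trace_comm_sq n d W hW D hDdef]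
  have htw : ∀ i, Complex.normSq (W i i) = (W i i).re ^ 2 := by
    intro i
    rw [diag_real n W hW i, Complex.normSq_ofReal]
    simp [sq]
  have ht : ∀ i j, (0:ℝ) ≤ Complex.normSq (W i j) := fun i j => Complex.normSq_nonneg _
  have hr0 : (0:ℝ) ≤ ∑ i, ∑ j, (d i - d j) ^ 2 * Complex.normSq (W i j) :=
    Finset.sum_nonneg fun i _ => Finset.sum_nonneg fun j _ =>
      mul_nonneg (sq_nonneg _) (ht i j)
  have hmain := core_ineq n d (fun i j => Complex.normSq (W i j)) ht
    (fun i => (W i i).re) htw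
  rw [tC, tYY, tZZ, tYZ]
  simp only [Complex.neg_re, Complex.neg_im, Complex.ofReal_re, Complex.ofReal_im, neg_zero]
  exact ⟨trivial, by linarith [hmain], by linarith [hr0]⟩
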